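/- Let v ∈ ℂ^d satisfy ν^v_w ≠ 2kπi for every word w and every nonzero integer k. For β ∈ 𝔤, let α_β : ℝ → ℂ^W be the unique function with all coefficient functions continuously differentiable such that α_β(0) = 1 and (d/dt) α_β(t)_w = (α_β(t)★(Ξ_{tv}β))_w for all words w and all t. Then the map β ↦ α_β(1) is a bijection from 𝔤 onto G; i.e., for every γ ∈ G there exists exactly one β ∈ 𝔤 with α_β(1) = γ. -/

import Mathlib

open scoped BigOperators

/-- Convolution product on `ℂ^W`: `(δ★δ′)_w = Σ_{w=w₁w₂} δ_{w₁} δ′_{w₂}`. -/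
noncomputable def conv {A : Type*} (x y : List A → ℂ) : List A → ℂ :=
  fun w => ∑ i ∈ Finset.range (w.length + 1), x (w.take i) * y (w.drop i)

/-- Shuffle product of two words, as a multiset of words. -/
def shuffle {A : Type*} : List A → List A → Multiset (List A)
  | [], w => {w}
  | w, [] => {w}
  | a :: u, b :: v =>
      ((shuffle u (b :: v)).map (a :: ·)) + ((shuffle (a :: u) v).map (b :: ·))

/-- Membership in the group `G`: the shuffle relations with `γ_∅ = 1`. -/
def isGrp {A : Type*} (γ : List A → ℂ) : Prop :=
  γ [] = 1 ∧ ∀ w w' : List A, γ w * γ w' = ((shuffle w w').map γ).sum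

/-- Membership in the Lie algebra `𝔤`. -/
def isLie {A : Type*} (β : List A → ℂ) : Prop :=
  β [] = 0 ∧ ∀ w w' : List A, w ≠ [] → w' ≠ [] → ((shuffle w w').map β).sum = 0

/-- The unit `1` of the convolution product. -/
def unitCW {A : Type*} : List A → ℂ := fun w => match w with | [] => 1 | _ => 0

/-- `ν^v_ℓ = Σ_j v_j ν_{j,ℓ}` for a letter `ℓ`. -/
noncomputable def nuL {A : Type*} {d : ℕ} (ν : Fin d → A → ℂ) (v : Fin d → ℂ) (ℓ : A) : ℂ :=
  ∑ j, v j * ν j ℓ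

/-- `ν^v_w = ν^v_{ℓ₁} + ⋯ + ν^v_{ℓ_n}` for a word `w = ℓ₁⋯ℓ_n`. -/
noncomputable def nuW {A : Type*} {d : ℕ} (ν : Fin d → A → ℂ) (v : Fin d → ℂ) (w : List A) : ℂ :=
  (w.map (nuL ν v)).sum

/-- The operator `Ξ_v`: `(Ξ_v δ)_w = exp(ν^v_w) δ_w`. -/
noncomputable def XiOp {A : Type*} {d : ℕ} (ν : Fin d → A → ℂ) (v : Fin d → ℂ)
    (δ : List A → ℂ) : List A → ℂ :=
  fun w => Complex.exp (nuW ν v w) * δ w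

/-- The operator `ξ_v`: `(ξ_v δ)_w = ν^v_w δ_w`. -/
noncomputable def xiOp {A : Type*} {d : ℕ} (ν : Fin d → A → ℂ) (v : Fin d → ℂ)
    (δ : List A → ℂ) : List A → ℂ :=
  fun w => nuW ν v w * δ w

namespace St
variable {A : Type*}
noncomputable def shSum (f : List A → ℂ) (p q : List A) : ℂ := ((shuffle p q).map f).sum
@[simp] lemma shuffle_nil_left (w : List A) : shuffle [] w = {w} := by cases w <;> simp [shuffle]
@[simp] lemma shuffle_nil_right (w : List A) : shuffle w [] = {w} := by cases w <;> simp [shuffle]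
lemma shuffle_cons (a b : A) (u v : List A) :
    shuffle (a::u) (b::v)
      = ((shuffle u (b :: v)).map (a :: ·)) + ((shuffle (a :: u) v).map (b :: ·)) := by simp [shuffle]
@[simp] lemma shSum_nil_left (f : List A → ℂ) (q : List A) : shSum f [] q = f q := by simp [shSum]
@[simp] lemma shSum_nil_right (f : List A → ℂ) (p : List A) : shSum f p [] = f p := by simp [shSum]
lemma shSum_cons (f : List A → ℂ) (a b : A) (u v : List A) :
    shSum f (a::u) (b::v)
      = shSum (fun x => f (a::x)) u (b::v) + shSum (fun x => f (b::x)) (a::u) v := by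
  simp [shSum, shuffle_cons, Multiset.map_map, Function.comp]
lemma shSum_add (f g : List A → ℂ) (p q : List A) :
    shSum (fun x => f x + g x) p q = shSum f p q + shSum g p q := by
  simp [shSum, Multiset.sum_map_add]
lemma shSum_mul_left (c : ℂ) (f : List A → ℂ) (p q : List A) :
    shSum (fun x => c * f x) p q = c * shSum f p q := by
  simp [shSum, Multiset.sum_map_mul_left]

lemma conv_nil (f g : List A → ℂ) : conv f g [] = f [] * g [] := by simp [conv]

lemma conv_cons (f g : List A → ℂ) (a : A) (x : List A) :
    conv f g (a::x) = f [] * g (a::x) + conv (fun y => f (a::y)) g x := by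
  rw [conv, Finset.sum_range_succ']
  simp [conv, add_comm]

lemma shSum_conv (w : List A) : ∀ (w' : List A) (f g : List A → ℂ),
    shSum (conv f g) w w' =
      ∑ j ∈ Finset.range (w.length+1), ∑ k ∈ Finset.range (w'.length+1),
        shSum f (w.take j) (w'.take k) * shSum g (w.drop j) (w'.drop k) := by
  induction w with
  | nil =>
    intro w' f g
    simp [conv]
  | cons a u IH =>
    intro w'
    induction w' with
    | nil =>
      intro f g
      simp [conv]
    | cons b v IH2 =>
      intro f g
      rw [shSum_cons]
      simp only [conv_cons]
      rw [shSum_add, shSum_add, shSum_mul_left, shSum_mul_left]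
      rw [IH (b::v) (fun y => f (a::y)) g, IH2 (fun y => f (b::y)) g]
      -- Now expand the RHS
      rw [show ((a::u).length + 1) = (u.length + 1) + 1 by simp,
          show ((b::v).length + 1) = (v.length + 1) + 1 by simp]
      rw [Finset.sum_range_succ' (fun j => ∑ k ∈ Finset.range (v.length + 1 + 1),
        shSum f ((a::u).take j) ((b::v).take k) * shSum g ((a::u).drop j) ((b::v).drop k))
        (u.length + 1)]
      conv_rhs => rw [Finset.sum_congr rfl (fun j (_ : j ∈ Finset.range (u.length+1)) =>
        Finset.sum_range_succ' (fun k => shSum f ((a::u).take (j+1)) ((b::v).take k) *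
          shSum g ((a::u).drop (j+1)) ((b::v).drop k)) (v.length + 1))]
      conv_rhs => rw [Finset.sum_range_succ' (fun k => shSum f ((a::u).take 0) ((b::v).take k) *
          shSum g ((a::u).drop 0) ((b::v).drop k)) (v.length + 1)]
      conv_lhs => rw [Finset.sum_congr rfl (fun j (_ : j ∈ Finset.range (u.length+1)) =>
        Finset.sum_range_succ' (fun k => shSum (fun y => f (a::y)) (u.take j) ((b::v).take k) *
          shSum g (u.drop j) ((b::v).drop k)) (v.length + 1))]
      conv_lhs => rw [Finset.sum_range_succ' (fun j => ∑ k ∈ Finset.range (v.length + 1),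
        shSum (fun y => f (b::y)) ((a::u).take j) (v.take k) *
          shSum g ((a::u).drop j) (v.drop k)) (u.length + 1)]
      simp only [List.take_succ_cons, List.drop_succ_cons, List.take_zero, List.drop_zero,
        shSum_nil_left, shSum_nil_right]
      simp only [shSum_cons f a b, add_mul, Finset.sum_add_distrib]
      rw [shSum_cons g a b]
      ring

lemma perm_of_mem_shuffle : ∀ (w w' u : List A), u ∈ shuffle w w' → u.Perm (w ++ w')
  | [], w', u, h => by simp at h; simp [h]
  | a :: w, [], u, h => by simp at h; simp [h]
  | a :: w, b :: w', u, h => by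
    rw [shuffle_cons, Multiset.mem_add] at h
    rcases h with h | h
    · rcases Multiset.mem_map.1 h with ⟨x, hx, rfl⟩
      exact (perm_of_mem_shuffle _ _ _ hx).cons a
    · rcases Multiset.mem_map.1 h with ⟨x, hx, rfl⟩
      exact ((perm_of_mem_shuffle _ _ _ hx).cons b).trans List.perm_middle.symm

lemma length_of_mem_shuffle (w w' u : List A) (h : u ∈ shuffle w w') :
    u.length = w.length + w'.length := by
  simpa using (perm_of_mem_shuffle w w' u h).length_eq


variable {d : ℕ} (ν : Fin d → A → ℂ) (v : Fin d → ℂ)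

@[simp] lemma nuW_nil : nuW ν v ([] : List A) = 0 := by simp [nuW]

lemma nuW_append (w w' : List A) : nuW ν v (w ++ w') = nuW ν v w + nuW ν v w' := by
  simp [nuW]

lemma nuW_smul (t : ℝ) (w : List A) : nuW ν (t • v) w = (t : ℂ) * nuW ν v w := by
  have h : ∀ ℓ : A, nuL ν (t • v) ℓ = (t:ℂ) * nuL ν v ℓ := by
    intro ℓ
    simp [nuL, Finset.mul_sum, Complex.real_smul, mul_assoc]
  induction w with
  | nil => simp [nuW]
  | cons a w ih => simp [nuW, h] at ih ⊢; rw [ih]; ring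

lemma nuW_of_mem_shuffle (w w' u : List A) (h : u ∈ shuffle w w') :
    nuW ν v u = nuW ν v w + nuW ν v w' := by
  have := ((perm_of_mem_shuffle w w' u h).map (nuL ν v)).sum_eq
  simpa [nuW, ← nuW_append] using this

lemma shSum_XiOp (t : ℝ) (β : List A → ℂ) (p q : List A) :
    shSum (XiOp ν (t • v) β) p q
      = Complex.exp ((t:ℂ) * (nuW ν v p + nuW ν v q)) * shSum β p q := by
  rw [shSum, shSum, ← Multiset.sum_map_mul_left]
  congr 1
  apply Multiset.map_congr rfl
  intro x hx
  simp [XiOp, nuW_smul, nuW_of_mem_shuffle ν v p q x hx]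

lemma hasDerivAt_msum (m : Multiset (List A)) (F : ℝ → List A → ℂ) (F' : List A → ℂ) (t : ℝ)
    (h : ∀ u ∈ m, HasDerivAt (fun s => F s u) (F' u) t) :
    HasDerivAt (fun s => ((m.map (F s)).sum)) ((m.map F').sum) t := by
  induction m using Multiset.induction_on with
  | empty => simpa using hasDerivAt_const t (0:ℂ)
  | cons a s ih =>
    simp only [Multiset.map_cons, Multiset.sum_cons]
    exact (h a (Multiset.mem_cons_self a s)).add
      (ih fun u hu => h u (Multiset.mem_cons_of_mem hu))

lemma const_of_deriv_zero {f : ℝ → ℂ} (h : ∀ t, HasDerivAt f 0 t) (a b : ℝ) : f a = f b :=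
  is_const_of_deriv_eq_zero (fun t => (h t).differentiableAt) (fun t => (h t).deriv) a b

noncomputable def Pfun (z : ℂ) (t : ℝ) : ℂ :=
  if z = 0 then (t:ℂ) else (Complex.exp ((t:ℂ)*z) - 1)/z

lemma hasDerivAt_exp_mul (z : ℂ) (t : ℝ) :
    HasDerivAt (fun s : ℝ => Complex.exp ((s:ℂ)*z)) (Complex.exp ((t:ℂ)*z) * z) t := by
  have h1 : HasDerivAt (fun u : ℂ => Complex.exp (u * z)) (Complex.exp ((t:ℂ)*z) * z) (t:ℂ) := by
    simpa using ((hasDerivAt_id ((t:ℂ))).mul_const z).cexp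
  exact h1.comp_ofReal

lemma hasDerivAt_Pfun (z : ℂ) (t : ℝ) :
    HasDerivAt (fun s : ℝ => Pfun z s) (Complex.exp ((t:ℂ)*z)) t := by
  by_cases hz : z = 0
  · subst hz
    simp only [Pfun, if_true, mul_zero, Complex.exp_zero]
    exact (hasDerivAt_id ((t:ℂ))).comp_ofReal
  · simp only [Pfun, if_neg hz]
    have := (((hasDerivAt_exp_mul z t).sub_const 1).div_const z)
    simpa [mul_div_assoc, mul_div_cancel_right₀ _ hz] using this

@[simp] lemma Pfun_zero (z : ℂ) : Pfun z 0 = 0 := by simp [Pfun]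

lemma Pfun_one_ne_zero {z : ℂ} (hz : ∀ k : ℤ, k ≠ 0 → z ≠ 2 * (k:ℂ) * Real.pi * Complex.I) :
    Pfun z 1 ≠ 0 := by
  by_cases h0 : z = 0
  · subst h0; simp [Pfun]
  · simp only [Pfun, if_neg h0, Complex.ofReal_one, one_mul]
    apply div_ne_zero _ h0
    intro hc
    have hc' : Complex.exp z = 1 := by
      have := sub_eq_zero.1 hc; exact this
    rcases Complex.exp_eq_one_iff.1 hc' with ⟨n, hn⟩
    by_cases hn0 : n = 0
    · subst hn0; simp at hn; exact h0 hn
    · exact hz n hn0 (by rw [hn]; ring)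



section Sol

variable {β : List A → ℂ} {α : ℝ → List A → ℂ}
  (hβ0 : β [] = 0) (hα0 : α 0 = unitCW)
  (hder : ∀ (t : ℝ) (w : List A),
    HasDerivAt (fun s => α s w) (conv (α t) (XiOp ν (t • v) β) w) t)

include hβ0 hα0 hder

lemma alpha_nil : ∀ t, α t [] = 1 := by
  intro t
  have h : ∀ s, HasDerivAt (fun r => α r []) 0 s := by
    intro s
    have := hder s []
    simpa [conv, XiOp, hβ0] using this
  have := const_of_deriv_zero h t 0
  rw [this, hα0]; rfl

lemma key_deriv (w w' : List A) (hw : w ≠ []) (hw' : w' ≠ [])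
    (hS : ∀ a c : List A, a ≠ [] → c ≠ [] → a.length + c.length < w.length + w'.length →
      shSum β a c = 0)
    (hΦ : ∀ a c : List A, a.length + c.length < w.length + w'.length → ∀ s,
      α s a * α s c = shSum (α s) a c)
    (t : ℝ) :
    HasDerivAt (fun s => α s w * α s w' - shSum (α s) w w')
      (-(Complex.exp ((t:ℂ) * (nuW ν v w + nuW ν v w')) * shSum β w w')) t := by
  set b : List A → ℂ := XiOp ν (t • v) β with hb
  have h1 : HasDerivAt (fun s => α s w * α s w')
      (conv (α t) b w * α t w' + α t w * conv (α t) b w') t :=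
    (hder t w).mul (hder t w')
  have h2 : HasDerivAt (fun s => shSum (α s) w w') (shSum (conv (α t) b) w w') t := by
    exact hasDerivAt_msum (shuffle w w') α (conv (α t) b) t (fun u _ => hder t u)
  have h3 := h1.sub h2
  have key : conv (α t) b w * α t w' + α t w * conv (α t) b w' - shSum (conv (α t) b) w w'
      = -(Complex.exp ((t:ℂ) * (nuW ν v w + nuW ν v w')) * shSum β w w') := by
    have hb0 : b [] = 0 := by simp [hb, XiOp, hβ0]
    have hanil : α t [] = 1 := alpha_nil ν v hβ0 hα0 hder t
    rw [shSum_conv]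
    -- notation
    set n1 := w.length with hn1
    set n2 := w'.length with hn2
    have hn1pos : 0 < n1 := List.length_pos_iff.2 hw
    have hn2pos : 0 < n2 := List.length_pos_iff.2 hw'
    -- split double sum
    rw [Finset.sum_congr rfl (fun j (_ : j ∈ Finset.range (n1+1)) => Finset.sum_range_succ
      (fun k => shSum (α t) (w.take j) (w'.take k) * shSum b (w.drop j) (w'.drop k)) n2)]
    rw [Finset.sum_add_distrib, Finset.sum_range_succ
      (fun j => ∑ k ∈ Finset.range n2, shSum (α t) (w.take j) (w'.take k) *
        shSum b (w.drop j) (w'.drop k)) n1]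
    -- the (j<n1, k<n2) block equals the single (0,0) term
    have hblock : ∑ j ∈ Finset.range n1, ∑ k ∈ Finset.range n2,
        shSum (α t) (w.take j) (w'.take k) * shSum b (w.drop j) (w'.drop k)
        = Complex.exp ((t:ℂ) * (nuW ν v w + nuW ν v w')) * shSum β w w' := by
      rw [Finset.sum_eq_single_of_mem 0 (Finset.mem_range.2 hn1pos)]
      · rw [Finset.sum_eq_single_of_mem 0 (Finset.mem_range.2 hn2pos)]
        · simp only [List.take_zero, List.drop_zero, shSum_nil_left, shSum_nil_right, hanil,
            one_mul]
          rw [hb, shSum_XiOp]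
        · intro k hk hk0
          have hkn : k < n2 := Finset.mem_range.1 hk
          rw [hb, shSum_XiOp, hS (w.drop 0) (w'.drop k)
            (by simpa using hw)
            (by simp [← List.length_pos_iff]; omega)
            (by simp; omega)]
          ring
      · intro j hj hj0
        have hjn : j < n1 := Finset.mem_range.1 hj
        apply Finset.sum_eq_zero
        intro k hk
        have hkn : k < n2 := Finset.mem_range.1 hk
        rw [hb, shSum_XiOp, hS (w.drop j) (w'.drop k)
          (by simp [← List.length_pos_iff]; omega)
          (by simp [← List.length_pos_iff]; omega)
          (by simp; omega)]
        ring
    rw [hblock]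
    -- the k = n2 column
    have hcol : ∑ j ∈ Finset.range (n1+1),
        shSum (α t) (w.take j) (w'.take n2) * shSum b (w.drop j) (w'.drop n2)
        = conv (α t) b w * α t w' := by
      rw [conv, Finset.sum_mul]
      apply Finset.sum_congr rfl
      intro j hj
      have hjn : j ≤ n1 := Nat.lt_succ_iff.1 (Finset.mem_range.1 hj)
      rw [hn2, List.take_length, List.drop_length, shSum_nil_right]
      rcases Nat.lt_or_ge j n1 with hlt | hge
      · rw [← hΦ (w.take j) w' (by simp; omega) t]; ring
      · have hj1 : j = n1 := le_antisymm hjn hge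
        subst hj1
        rw [hn1, List.drop_length, hb0]
        ring
    -- the j = n1 row
    have hrow : ∑ k ∈ Finset.range n2,
        shSum (α t) (w.take n1) (w'.take k) * shSum b (w.drop n1) (w'.drop k)
        = α t w * conv (α t) b w' := by
      have hconv : conv (α t) b w' = ∑ k ∈ Finset.range n2, α t (w'.take k) * b (w'.drop k) := by
        rw [conv, ← hn2, Finset.sum_range_succ, List.drop_length, hb0]
        simp
      rw [hconv, Finset.mul_sum]
      apply Finset.sum_congr rfl
      intro k hk
      have hkn : k < n2 := Finset.mem_range.1 hk
      rw [hn1, List.take_length, List.drop_length, shSum_nil_left]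
      rw [← hΦ w (w'.take k) (by simp; omega) t]
      ring
    rw [hcol, hrow]
    ring
  rw [← key]
  exact h3


omit hβ0 hα0 hder in
lemma unit_ne_nil {w : List A} (hw : w ≠ []) : unitCW w = 0 := by
  cases w with
  | nil => exact absurd rfl hw
  | cons a u => rfl

omit hβ0 hα0 hder in
lemma shSum_unit {w w' : List A} (hw : w ≠ []) : shSum (unitCW : List A → ℂ) w w' = 0 := by
  apply Multiset.sum_eq_zero
  intro x hx
  rcases Multiset.mem_map.1 hx with ⟨u, hu, rfl⟩
  apply unit_ne_nil
  have := length_of_mem_shuffle w w' u hu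
  have hwp : 0 < w.length := List.length_pos_iff.2 hw
  intro h
  rw [h] at this
  simp at this
  omega

lemma grp_all (N : ℕ)
    (hS : ∀ a c : List A, a ≠ [] → c ≠ [] → a.length + c.length ≤ N → shSum β a c = 0) :
    ∀ w w' : List A, w.length + w'.length ≤ N → ∀ t, α t w * α t w' = shSum (α t) w w' := by
  induction N with
  | zero =>
    intro w w' hlen t
    have hw : w = [] := by cases w <;> simp_all
    have hw' : w' = [] := by cases w' <;> simp_all
    subst hw; subst hw'
    simp [alpha_nil ν v hβ0 hα0 hder t]
  | succ N IH =>
    intro w w' hlen t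
    rcases eq_or_ne w [] with rfl | hw
    · rw [alpha_nil ν v hβ0 hα0 hder t]; simp
    rcases eq_or_ne w' [] with rfl | hw'
    · rw [alpha_nil ν v hβ0 hα0 hder t]; simp
    rcases Nat.lt_or_ge (w.length + w'.length) (N+1) with hlt | hge
    · exact IH (fun a c ha hc h => hS a c ha hc (h.trans (Nat.le_succ N))) w w'
        (Nat.lt_succ_iff.1 hlt) t
    have hd : ∀ s, HasDerivAt (fun r => α r w * α r w' - shSum (α r) w w') 0 s := by
      intro s
      have hk := key_deriv ν v hβ0 hα0 hder w w' hw hw'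
        (fun a c ha hc h => hS a c ha hc (by omega))
        (fun a c h r => IH (fun a' c' ha' hc' h' => hS a' c' ha' hc' (h'.trans (Nat.le_succ N)))
          a c (by omega) r) s
      rwa [hS w w' hw hw' hlen, mul_zero, neg_zero] at hk
    have h0 : α 0 w * α 0 w' - shSum (α 0) w w' = 0 := by
      rw [hα0, unit_ne_nil hw, shSum_unit hw]
      ring
    have := const_of_deriv_zero hd t 0
    have ht : α t w * α t w' - shSum (α t) w w' = 0 := by rw [this]; exact h0
    linear_combination ht


end Sol

variable (γ : List A → ℂ)

noncomputable def Fx : List A → ℂ × (ℝ → ℂ)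
  | [] => (0, fun _ => (1:ℂ))
  | a :: u =>
    let rest : ℝ → ℂ := fun s =>
      ∑ i ∈ (Finset.Ioo 0 (a::u).length).attach,
        (Fx ((a::u).take i.1)).2 s * Complex.exp ((s:ℂ) * nuW ν v ((a::u).drop i.1)) *
          (Fx ((a::u).drop i.1)).1
    let b : ℂ := (γ (a::u) - ∫ s in (0:ℝ)..1, rest s) / Pfun (nuW ν v (a::u)) 1
    (b, fun t => ∫ s in (0:ℝ)..t,
      (Complex.exp ((s:ℂ) * nuW ν v (a::u)) * b + rest s))
  termination_by w => w.length
  decreasing_by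
  · have := i.2
    simp only [Finset.mem_Ioo, List.length_cons] at this
    simp [List.length_take]
    omega
  · have := i.2
    simp only [Finset.mem_Ioo, List.length_cons] at this
    simp
    omega


noncomputable def bX (w : List A) : ℂ := (Fx ν v γ w).1
noncomputable def aX (w : List A) (t : ℝ) : ℂ := (Fx ν v γ w).2 t
noncomputable def restX (w : List A) (s : ℝ) : ℂ :=
  ∑ i ∈ (Finset.Ioo 0 w.length).attach,
    aX ν v γ (w.take i.1) s * Complex.exp ((s:ℂ) * nuW ν v (w.drop i.1)) * bX ν v γ (w.drop i.1)

@[simp] lemma bX_nil : bX ν v γ [] = 0 := by rw [bX, Fx]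
@[simp] lemma aX_nil (t : ℝ) : aX ν v γ [] t = 1 := by rw [aX, Fx]
@[simp] lemma restX_nil (s : ℝ) : restX ν v γ [] s = 0 := by simp [restX]

lemma bX_cons (a : A) (u : List A) :
    bX ν v γ (a::u)
      = (γ (a::u) - ∫ s in (0:ℝ)..1, restX ν v γ (a::u) s) / Pfun (nuW ν v (a::u)) 1 := by
  rw [bX, Fx]; rfl

lemma aX_cons (a : A) (u : List A) (t : ℝ) :
    aX ν v γ (a::u) t = ∫ s in (0:ℝ)..t,
      (Complex.exp ((s:ℂ) * nuW ν v (a::u)) * bX ν v γ (a::u) + restX ν v γ (a::u) s) := by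
  rw [aX, Fx, bX_cons]
  simp only [restX, aX, bX]

lemma cont_exp_mul (c : ℂ) : Continuous (fun s : ℝ => Complex.exp ((s:ℂ) * c)) :=
  (Complex.continuous_ofReal.mul continuous_const).cexp

lemma restX_cont (w : List A)
    (h : ∀ u : List A, u.length < w.length → Continuous (fun s => aX ν v γ u s)) :
    Continuous (restX ν v γ w) := by
  apply continuous_finset_sum
  rintro ⟨i, hi⟩ -
  simp only [Finset.mem_Ioo] at hi
  exact ((h (w.take i) (by simp [List.length_take]; omega)).mul
    (cont_exp_mul _)).mul continuous_const

lemma aX_spec : ∀ (n : ℕ) (w : List A), w.length ≤ n →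
    Continuous (fun s => aX ν v γ w s) ∧
    ∀ t : ℝ, HasDerivAt (fun s => aX ν v γ w s)
      (Complex.exp ((t:ℂ) * nuW ν v w) * bX ν v γ w + restX ν v γ w t) t := by
  intro n
  induction n with
  | zero =>
    intro w hw
    have : w = [] := by cases w <;> simp_all
    subst this
    constructor
    · simp only [aX_nil]; exact continuous_const
    · intro t
      simp only [aX_nil, bX_nil, restX_nil, mul_zero, add_zero]
      exact hasDerivAt_const t 1
  | succ n IH =>
    intro w hw
    cases w with
    | nil =>
      constructor
      · simp only [aX_nil]; exact continuous_const
      · intro t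
        simp only [aX_nil, bX_nil, restX_nil, mul_zero, add_zero]
        exact hasDerivAt_const t 1
    | cons a u =>
      have hlen : (a::u).length ≤ n + 1 := hw
      have hcontrest : Continuous (restX ν v γ (a::u)) := by
        apply restX_cont
        intro x hx
        exact (IH x (by simp at hx hlen ⊢; omega)).1
      have hg : Continuous (fun s : ℝ =>
          Complex.exp ((s:ℂ) * nuW ν v (a::u)) * bX ν v γ (a::u) + restX ν v γ (a::u) s) :=
        ((cont_exp_mul _).mul continuous_const).add hcontrest
      have hd : ∀ t : ℝ, HasDerivAt (fun s => aX ν v γ (a::u) s)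
          (Complex.exp ((t:ℂ) * nuW ν v (a::u)) * bX ν v γ (a::u)
            + restX ν v γ (a::u) t) t := by
        intro t
        have := intervalIntegral.integral_hasDerivAt_right
          (hg.intervalIntegrable 0 t)
          (hg.stronglyMeasurableAtFilter _ _)
          hg.continuousAt
        have heq : (fun s => aX ν v γ (a::u) s) = (fun r => ∫ s in (0:ℝ)..r,
            (Complex.exp ((s:ℂ) * nuW ν v (a::u)) * bX ν v γ (a::u)
              + restX ν v γ (a::u) s)) := by
          funext r; exact aX_cons ν v γ a u r
        rw [heq]
        exact this
      exact ⟨Differentiable.continuous (fun t => (hd t).differentiableAt), hd⟩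


lemma sum_range_split (n : ℕ) (hn : 0 < n) (h : ℕ → ℂ) :
    ∑ i ∈ Finset.range (n+1), h i = h 0 + h n + ∑ i ∈ Finset.Ioo 0 n, h i := by
  have e : Finset.range (n+1) = insert 0 (insert n (Finset.Ioo 0 n)) := by
    ext x
    simp only [Finset.mem_range, Finset.mem_insert, Finset.mem_Ioo]
    omega
  rw [e, Finset.sum_insert (by simp [Finset.mem_Ioo]; omega),
    Finset.sum_insert (by simp [Finset.mem_Ioo])]
  ring

lemma conv_aX (t : ℝ) (w : List A) :
    conv (fun x => aX ν v γ x t) (XiOp ν (t • v) (fun x => bX ν v γ x)) w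
      = Complex.exp ((t:ℂ) * nuW ν v w) * bX ν v γ w + restX ν v γ w t := by
  cases w with
  | nil => simp [conv, XiOp]
  | cons a u =>
    rw [conv]
    have hn : 0 < (a::u).length := by simp
    rw [show (a::u).length + 1 = ((a::u).length) + 1 from rfl]
    rw [sum_range_split _ hn]
    rw [restX, Finset.sum_attach (Finset.Ioo 0 (a::u).length)
      (fun i => aX ν v γ ((a::u).take i) t * Complex.exp ((t:ℂ) * nuW ν v ((a::u).drop i))
        * bX ν v γ ((a::u).drop i))]
    simp only [List.take_zero, List.drop_zero, List.take_length, List.drop_length, aX_nil,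
      bX_nil, XiOp, nuW_smul, nuW_nil, one_mul, mul_zero, add_zero, mul_one, Complex.exp_zero]
    simp only [mul_assoc]

lemma aX_hder (t : ℝ) (w : List A) :
    HasDerivAt (fun s => aX ν v γ w s)
      (conv (fun x => aX ν v γ x t) (XiOp ν (t • v) (fun x => bX ν v γ x)) w) t := by
  rw [conv_aX]
  exact (aX_spec ν v γ w.length w le_rfl).2 t

lemma aX_zero (w : List A) : aX ν v γ w 0 = unitCW w := by
  cases w with
  | nil => simp [unitCW]
  | cons a u => rw [aX_cons]; simp [unitCW]

lemma aX_contDiff (w : List A) : ContDiff ℝ 1 (fun s => aX ν v γ w s) := by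
  rw [contDiff_one_iff_deriv]
  have hs := aX_spec ν v γ w.length w le_rfl
  refine ⟨fun t => ((hs.2 t).differentiableAt), ?_⟩
  have : deriv (fun s => aX ν v γ w s)
      = fun t : ℝ => Complex.exp ((t:ℂ) * nuW ν v w) * bX ν v γ w + restX ν v γ w t := by
    funext t; exact (hs.2 t).deriv
  rw [this]
  exact ((cont_exp_mul _).mul continuous_const).add
    (restX_cont ν v γ w (fun u _ => (aX_spec ν v γ u.length u le_rfl).1))

lemma integral_exp_Pfun (z : ℂ) : (∫ s in (0:ℝ)..1, Complex.exp ((s:ℂ)*z)) = Pfun z 1 := by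
  rw [intervalIntegral.integral_eq_sub_of_hasDerivAt
    (fun s _ => hasDerivAt_Pfun z s) ((cont_exp_mul z).intervalIntegrable 0 1)]
  simp

lemma aX_one (hγnil : γ [] = 1)
    (hP : ∀ w : List A, Pfun (nuW ν v w) 1 ≠ 0) (w : List A) :
    aX ν v γ w 1 = γ w := by
  cases w with
  | nil => simp [hγnil]
  | cons a u =>
    rw [aX_cons]
    have hrc : Continuous (restX ν v γ (a::u)) :=
      restX_cont ν v γ _ (fun x _ => (aX_spec ν v γ x.length x le_rfl).1)
    rw [intervalIntegral.integral_add
      (f := fun s : ℝ => Complex.exp ((s:ℂ) * nuW ν v (a::u)) * bX ν v γ (a::u))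
      (g := restX ν v γ (a::u))
      (((cont_exp_mul _).mul continuous_const).intervalIntegrable 0 1)
      (hrc.intervalIntegrable 0 1)]
    rw [intervalIntegral.integral_mul_const, integral_exp_Pfun]
    rw [bX_cons]
    field_simp [hP (a::u)]
    exact sub_add_cancel _ _


lemma bX_lie (hγ1 : γ [] = 1) (hγ : ∀ w w' : List A, γ w * γ w' = ((shuffle w w').map γ).sum)
    (hP : ∀ w : List A, Pfun (nuW ν v w) 1 ≠ 0) :
    ∀ (N : ℕ) (w w' : List A), w ≠ [] → w' ≠ [] → w.length + w'.length ≤ N →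
      shSum (fun x => bX ν v γ x) w w' = 0 := by
  set β : List A → ℂ := fun x => bX ν v γ x with hβ
  set α : ℝ → List A → ℂ := fun t x => aX ν v γ x t with hα
  have hβ0 : β [] = 0 := bX_nil ν v γ
  have hα0 : α 0 = unitCW := funext (aX_zero ν v γ)
  have hder : ∀ (t : ℝ) (w : List A),
      HasDerivAt (fun s => α s w) (conv (α t) (XiOp ν (t • v) β) w) t :=
    fun t w => aX_hder ν v γ t w
  intro N
  induction N with
  | zero =>
    intro w w' hw hw' hlen
    have := List.length_pos_iff.2 hw
    omega
  | succ N IH =>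
    intro w w' hw hw' hlen
    rcases Nat.lt_or_ge (w.length + w'.length) (N+1) with hlt | hge
    · exact IH w w' hw hw' (by omega)
    set S := shSum β w w' with hSdef
    set z := nuW ν v w + nuW ν v w' with hzdef
    have hΨ : ∀ s : ℝ, HasDerivAt
        (fun r => (α r w * α r w' - shSum (α r) w w') + Pfun z r * S) 0 s := by
      intro s
      have hk := key_deriv ν v hβ0 hα0 hder w w' hw hw'
        (fun a c ha hc h => IH a c ha hc (by omega))
        (fun a c h r => grp_all ν v hβ0 hα0 hder N
          (fun a' c' ha' hc' h' => IH a' c' ha' hc' h') a c (by omega) r) s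
      have := hk.add ((hasDerivAt_Pfun z s).mul_const S)
      rw [← hzdef, ← hSdef, neg_add_cancel] at this
      exact this
    have hc := const_of_deriv_zero hΨ 1 0
    have hγfun : (fun x => α 1 x) = γ := by
      funext x
      exact aX_one ν v γ hγ1 hP x
    have hΦ1 : α 1 w * α 1 w' - shSum (α 1) w w' = 0 := by
      have : shSum (α 1) w w' = shSum γ w w' := by
        rw [show (α 1) = γ from hγfun]
      rw [this, show α 1 w = γ w from by rw [← hγfun], show α 1 w' = γ w' from by rw [← hγfun]]
      rw [shSum]
      exact sub_eq_zero.2 (hγ w w')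
    have hΦ0 : α 0 w * α 0 w' - shSum (α 0) w w' = 0 := by
      rw [hα0, unit_ne_nil hw, shSum_unit hw]
      ring
    rw [hΦ1, hΦ0, Pfun_zero, zero_add, zero_mul, add_zero] at hc
    have hPz : Pfun z 1 ≠ 0 := by
      rw [hzdef, ← nuW_append]
      exact hP (w ++ w')
    have : S = 0 := by
      rcases mul_eq_zero.1 hc with h | h
      · exact absurd h hPz
      · exact h
    exact this

section Uniq

variable {β β' : List A → ℂ} {α α' : ℝ → List A → ℂ}

lemma alpha_agree
    (hβ0 : β [] = 0) (hβ'0 : β' [] = 0)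
    (hα0 : α 0 = unitCW) (hα'0 : α' 0 = unitCW)
    (hder : ∀ (t : ℝ) (w : List A),
      HasDerivAt (fun s => α s w) (conv (α t) (XiOp ν (t • v) β) w) t)
    (hder' : ∀ (t : ℝ) (w : List A),
      HasDerivAt (fun s => α' s w) (conv (α' t) (XiOp ν (t • v) β') w) t)
    (m : ℕ) (hag : ∀ x : List A, x.length ≤ m → β x = β' x) :
    ∀ (k : ℕ) (u : List A), u.length ≤ k → u.length ≤ m → ∀ t, α t u = α' t u := by
  intro k
  induction k with
  | zero =>
    intro u hu _ t
    have : u = [] := by cases u <;> simp_all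
    subst this
    rw [alpha_nil ν v hβ0 hα0 hder t, alpha_nil ν v hβ'0 hα'0 hder' t]
  | succ k IH =>
    intro u hu hum t
    have hconv : ∀ s : ℝ, conv (α s) (XiOp ν (s•v) β) u = conv (α' s) (XiOp ν (s•v) β') u := by
      intro s
      rw [conv, conv]
      apply Finset.sum_congr rfl
      intro i hi
      have hi' : i ≤ u.length := Nat.lt_succ_iff.1 (Finset.mem_range.1 hi)
      rcases Nat.lt_or_ge i u.length with hlt | hge
      · rw [IH (u.take i) (by simp [List.length_take]; omega)
          (by simp [List.length_take]; omega) s,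
          XiOp, XiOp, hag (u.drop i) (by simp; omega)]
      · have hieq : i = u.length := le_antisymm hi' hge
        subst hieq
        rw [List.drop_length, XiOp, XiOp, hβ0, hβ'0]
        simp
    have hz : ∀ s : ℝ, HasDerivAt (fun r => α r u - α' r u) 0 s := by
      intro s
      have h := (hder s u).sub (hder' s u)
      rwa [hconv s, sub_self] at h
    have hcst := const_of_deriv_zero hz t 0
    have h0 : α 0 u - α' 0 u = 0 := by rw [hα0, hα'0, sub_self]
    have : α t u - α' t u = 0 := by rw [hcst]; exact h0
    linear_combination this

lemma beta_unique
    (hP : ∀ w : List A, Pfun (nuW ν v w) 1 ≠ 0)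
    (hβ0 : β [] = 0) (hβ'0 : β' [] = 0)
    (hα0 : α 0 = unitCW) (hα'0 : α' 0 = unitCW)
    (hder : ∀ (t : ℝ) (w : List A),
      HasDerivAt (fun s => α s w) (conv (α t) (XiOp ν (t • v) β) w) t)
    (hder' : ∀ (t : ℝ) (w : List A),
      HasDerivAt (fun s => α' s w) (conv (α' t) (XiOp ν (t • v) β') w) t)
    (h1 : ∀ w : List A, α 1 w = α' 1 w) :
    β = β' := by
  have main : ∀ (n : ℕ) (w : List A), w.length ≤ n → β w = β' w := by
    intro n
    induction n with
    | zero =>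
      intro w hw
      have : w = [] := by cases w <;> simp_all
      subst this
      rw [hβ0, hβ'0]
    | succ n IH =>
      intro w hw
      rcases Nat.lt_or_ge w.length (n+1) with hlt | hge
      · exact IH w (by omega)
      have hlen : w.length = n+1 := le_antisymm hw hge
      have hw0 : w ≠ [] := by
        intro h; rw [h] at hlen; simp at hlen
      have hagree := alpha_agree ν v hβ0 hβ'0 hα0 hα'0 hder hder' n IH n
      set c : ℂ := β w - β' w with hcdef
      set z : ℂ := nuW ν v w with hzdef
      have hnl : ∀ t : ℝ, α t [] = 1 := alpha_nil ν v hβ0 hα0 hder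
      have hnl' : ∀ t : ℝ, α' t [] = 1 := alpha_nil ν v hβ'0 hα'0 hder'
      have hg : ∀ t : ℝ, HasDerivAt (fun s => α s w - α' s w - Pfun z s * c) 0 t := by
        intro t
        have h1d := ((hder t w).sub (hder' t w)).sub ((hasDerivAt_Pfun z t).mul_const c)
        have hval : conv (α t) (XiOp ν (t • v) β) w - conv (α' t) (XiOp ν (t • v) β') w
            - Complex.exp ((t:ℂ) * z) * c = 0 := by
          rw [conv, conv, sum_range_split w.length (by omega),
            sum_range_split w.length (by omega)]
          have hmid : ∑ i ∈ Finset.Ioo 0 w.length, α t (w.take i) * XiOp ν (t • v) β (w.drop i)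
              = ∑ i ∈ Finset.Ioo 0 w.length, α' t (w.take i) * XiOp ν (t • v) β' (w.drop i) := by
            apply Finset.sum_congr rfl
            intro i hi
            simp only [Finset.mem_Ioo] at hi
            rw [hagree (w.take i) (by simp [List.length_take]; omega) (by simp [List.length_take]; omega) t,
              XiOp, XiOp, IH (w.drop i) (by simp; omega)]
          rw [hmid]
          simp only [List.take_zero, List.drop_zero, List.take_length, List.drop_length,
            XiOp, hβ0, hβ'0, nuW_smul, nuW_nil, hnl t, hnl' t, hcdef, hzdef]
          ring
        rwa [hval] at h1d
      have hcst := const_of_deriv_zero hg 1 0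
      have h0 : α 0 w - α' 0 w - Pfun z 0 * c = 0 := by
        rw [hα0, hα'0, Pfun_zero, sub_self, zero_mul, sub_zero]
      rw [h0] at hcst
      rw [h1 w] at hcst
      have : Pfun z 1 * c = 0 := by linear_combination -hcst
      rcases mul_eq_zero.1 this with h | h
      · exact absurd h (hzdef ▸ hP w)
      · exact sub_eq_zero.1 (hcdef ▸ h)
  funext w
  exact main w.length w le_rfl

end Uniq
end St


/-- Under the non-resonance condition `ν^v_w ≠ 2kπi` (`k ∈ ℤ \ {0}`),
the exponential map `β ↦ α_β(1)`, where `α_β` solves `α(0) = 1`,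
`(d/dt)α(t) = α(t)★(Ξ_{tv}β)`, is a bijection from `𝔤` onto `G`: for each `β ∈ 𝔤` the value
`α_β(1)` lies in `G`, and each `γ ∈ G` is of the form `α_β(1)` for exactly one `β ∈ 𝔤`. -/
theorem stmt12 {A : Type*} [Countable A] {d : ℕ} (hd : 1 ≤ d) (ν : Fin d → A → ℂ)
    (v : Fin d → ℂ)
    (hres : ∀ (w : List A) (k : ℤ), k ≠ 0 →
      nuW ν v w ≠ 2 * (k : ℂ) * Real.pi * Complex.I) :
    (∀ β : List A → ℂ, isLie β →
      ∀ α : ℝ → List A → ℂ,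
        (∀ w : List A, ContDiff ℝ 1 (fun t => α t w)) →
        α 0 = unitCW →
        (∀ (t : ℝ) (w : List A),
          HasDerivAt (fun s => α s w) (conv (α t) (XiOp ν (t • v) β) w) t) →
        isGrp (α 1)) ∧
    (∀ γ : List A → ℂ, isGrp γ →
      ∃! β : List A → ℂ, isLie β ∧
        ∃ α : ℝ → List A → ℂ,
          (∀ w : List A, ContDiff ℝ 1 (fun t => α t w)) ∧
          α 0 = unitCW ∧
          (∀ (t : ℝ) (w : List A),
            HasDerivAt (fun s => α s w) (conv (α t) (XiOp ν (t • v) β) w) t) ∧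
          α 1 = γ) := by
  classical
  have hP : ∀ w : List A, St.Pfun (nuW ν v w) 1 ≠ 0 := fun w => St.Pfun_one_ne_zero (hres w)
  constructor
  · intro β hβ α _hC1 hα0 hder
    refine ⟨St.alpha_nil ν v hβ.1 hα0 hder 1, ?_⟩
    intro w w'
    exact St.grp_all ν v hβ.1 hα0 hder (w.length + w'.length)
      (fun a c ha hc _ => hβ.2 a c ha hc) w w' le_rfl 1
  · intro γ hγ
    refine ⟨fun w => St.bX ν v γ w, ⟨⟨St.bX_nil ν v γ, ?_⟩, ?_⟩, ?_⟩
    · intro w w' hw hw'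
      exact St.bX_lie ν v γ hγ.1 hγ.2 hP (w.length + w'.length) w w' hw hw' le_rfl
    · refine ⟨fun t w => St.aX ν v γ w t, fun w => St.aX_contDiff ν v γ w,
        funext (St.aX_zero ν v γ), fun t w => St.aX_hder ν v γ t w,
        funext (St.aX_one ν v γ hγ.1 hP)⟩
    · rintro y ⟨hylie, αy, _hyC1, hy0, hyder, hy1⟩
      exact St.beta_unique ν v hP hylie.1 (St.bX_nil ν v γ) hy0
        (funext (St.aX_zero ν v γ)) hyder (fun t w => St.aX_hder ν v γ t w)
        (fun w => by rw [hy1]; exact (St.aX_one ν v γ hγ.1 hP w).symm)
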